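/- Let μ be a Borel probability measure on ℝ satisfying the convex exponential property (τ) with constant C_τ: (∫e^{f□φ}dμ)(∫e^{−f}dμ) ≤ 1 for all bounded-below convex f, where φ(x) = φ₀(x/C_τ) and φ₀(x) = x²/2 for |x| ≤ 1, |x| − 1/2 otherwise. Then ∫e^{|x|/C_τ}dμ(x) < ∞. -/

import Mathlib

open MeasureTheory Set Real

theorem stmt19 (μ : Measure ℝ) [IsProbabilityMeasure μ]
    (Cτ : ℝ) (hCτ : 0 < Cτ)
    (φ₀ : ℝ → ℝ)
    (hφ₀ : ∀ x : ℝ, φ₀ x = if |x| ≤ 1 then x ^ 2 / 2 else |x| - 1 / 2)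
    (htau : ∀ f : ℝ → ℝ, ConvexOn ℝ Set.univ f → BddBelow (Set.range f) →
      (∫⁻ x, ENNReal.ofReal (Real.exp (⨅ y, (f y + φ₀ ((x - y) / Cτ)))) ∂μ) *
        (∫⁻ x, ENNReal.ofReal (Real.exp (-f x)) ∂μ) ≤ 1) :
    ∫⁻ x, ENNReal.ofReal (Real.exp (|x| / Cτ)) ∂μ < ⊤ := by
  set f : ℝ → ℝ := fun x => |x| / Cτ with hf_def
  have hφ₀low : ∀ u : ℝ, |u| - 1 / 2 ≤ φ₀ u := by
    intro u
    rw [hφ₀]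
    split_ifs with h
    · nlinarith [sq_abs u, sq_nonneg (|u| - 1)]
    · exact le_rfl
  have hconv : ConvexOn ℝ Set.univ f := by
    have := (convexOn_univ_norm (E := ℝ)).smul (c := Cτ⁻¹) (by positivity)
    have heq : f = fun x => Cτ⁻¹ • ‖x‖ := by
      funext x
      simp [hf_def, div_eq_inv_mul, Real.norm_eq_abs]
    rw [heq]; exact this
  have hbdd : BddBelow (Set.range f) := by
    refine ⟨0, ?_⟩
    rintro _ ⟨x, rfl⟩
    positivity
  have key := htau f hconv hbdd
  -- lower bound on the inf-convolution
  have hinf : ∀ x : ℝ, |x| / Cτ - 1 / 2 ≤ ⨅ y, (f y + φ₀ ((x - y) / Cτ)) := by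
    intro x
    refine le_ciInf fun y => ?_
    have h1 : |(x - y) / Cτ| - 1 / 2 ≤ φ₀ ((x - y) / Cτ) := hφ₀low _
    have h2 : |(x - y) / Cτ| = |x - y| / Cτ := by
      rw [abs_div, abs_of_pos hCτ]
    have h3 : |x| ≤ |y| + |x - y| := by
      have := abs_sub_abs_le_abs_sub x y
      linarith
    have h4 : |x| / Cτ ≤ |y| / Cτ + |x - y| / Cτ := by
      rw [← add_div]
      gcongr
    simp only [hf_def]
    linarith [h1, h2 ▸ h1]
  -- positivity of second integral
  have hBpos : 0 < ∫⁻ x, ENNReal.ofReal (Real.exp (-f x)) ∂μ := by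
    by_contra h
    push_neg at h
    have h0 : (∫⁻ x, ENNReal.ofReal (Real.exp (-f x)) ∂μ) = 0 := le_antisymm h zero_le
    have hmeas : Measurable fun x : ℝ => ENNReal.ofReal (Real.exp (-f x)) := by
      apply Measurable.ennreal_ofReal
      exact (measurable_id.abs.div_const Cτ).neg.exp
    rw [lintegral_eq_zero_iff hmeas] at h0
    have : μ Set.univ = 0 := by
      have hsub : Set.univ ⊆ {x : ℝ | ENNReal.ofReal (Real.exp (-f x)) ≠ 0} := by
        intro x _
        simp only [Set.mem_setOf_eq, ne_eq, ENNReal.ofReal_eq_zero, not_le]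
        exact Real.exp_pos _
      have := h0
      simp only [Filter.EventuallyEq, Filter.eventually_iff, Pi.zero_apply] at this
      have : μ {x : ℝ | ¬ ENNReal.ofReal (Real.exp (-f x)) = 0} = 0 :=
        (Filter.eventually_iff.mp h0 : _)
      refine measure_mono_null hsub this
    simp [measure_univ] at this
  -- first integral is finite
  have hAfin : (∫⁻ x, ENNReal.ofReal (Real.exp (⨅ y, (f y + φ₀ ((x - y) / Cτ)))) ∂μ) < ⊤ := by
    by_contra h
    push_neg at h
    rw [top_le_iff] at h
    rw [h, ENNReal.top_mul hBpos.ne'] at key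
    exact absurd key (by simp)
  -- conclude
  calc ∫⁻ x, ENNReal.ofReal (Real.exp (|x| / Cτ)) ∂μ
      ≤ ∫⁻ x, ENNReal.ofReal (Real.exp (1/2 : ℝ)) *
          ENNReal.ofReal (Real.exp (⨅ y, (f y + φ₀ ((x - y) / Cτ)))) ∂μ := by
        refine lintegral_mono fun x => ?_
        rw [← ENNReal.ofReal_mul (le_of_lt (Real.exp_pos _)), ← Real.exp_add]
        apply ENNReal.ofReal_le_ofReal
        apply Real.exp_le_exp.mpr
        linarith [hinf x]
    _ = ENNReal.ofReal (Real.exp (1/2 : ℝ)) *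
          ∫⁻ x, ENNReal.ofReal (Real.exp (⨅ y, (f y + φ₀ ((x - y) / Cτ)))) ∂μ :=
        lintegral_const_mul' _ _ ENNReal.ofReal_ne_top
    _ < ⊤ := ENNReal.mul_lt_top ENNReal.ofReal_lt_top hAfin
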